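/- Define N(s), IN₁(s), IN₂(s) as the closed-form Nirmala index expressions of the diamond structure: N(s) = 4√5 + (12s − 12)√6 + (6s² − 18s + 12)√7 + ((2s³ − 12s² + 22s − 12)/3)√8, IN₁(s) = √20 + 6√3·(s − 1) + √21·(s² − 3s + 2) + (√8/6)·(s³ − 6s² + 11s − 6), IN₂(s) = 8/√5 + (24/√3)·(s − 1) + (12√3/√7)·(s² − 3s + 2) + (√8/3)·(s³ − 6s² + 11s − 6). Then for every natural number s with 2 ≤ s ≤ 25, IN₁(s) < IN₂(s) < N(s). -/

import Mathlib

/-- Closed-form Nirmala index of the diamond structure of dimension `s`. -/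
noncomputable def diamondNirmala (s : ℝ) : ℝ :=
  4 * Real.sqrt 5 + (12 * s - 12) * Real.sqrt 6 + (6 * s ^ 2 - 18 * s + 12) * Real.sqrt 7
    + ((2 * s ^ 3 - 12 * s ^ 2 + 22 * s - 12) / 3) * Real.sqrt 8

/-- Closed-form first inverse Nirmala index of the diamond structure of dimension `s`. -/
noncomputable def diamondInverseNirmala₁ (s : ℝ) : ℝ :=
  Real.sqrt 20 + 6 * Real.sqrt 3 * (s - 1) + Real.sqrt 21 * (s ^ 2 - 3 * s + 2)
    + (Real.sqrt 8 / 6) * (s ^ 3 - 6 * s ^ 2 + 11 * s - 6)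

/-- Closed-form second inverse Nirmala index of the diamond structure of dimension `s`. -/
noncomputable def diamondInverseNirmala₂ (s : ℝ) : ℝ :=
  8 / Real.sqrt 5 + (24 / Real.sqrt 3) * (s - 1)
    + (12 * Real.sqrt 3 / Real.sqrt 7) * (s ^ 2 - 3 * s + 2)
    + (Real.sqrt 8 / 3) * (s ^ 3 - 6 * s ^ 2 + 11 * s - 6)

lemma diamond_aux₁ (x : ℝ) (hx : 2 ≤ x) (hq : 0 ≤ x ^ 2 - 3 * x + 2)
    (hc : 0 ≤ x ^ 3 - 6 * x ^ 2 + 11 * x - 6) :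
    diamondInverseNirmala₁ x < diamondInverseNirmala₂ x := by
  have s3 := Real.sq_sqrt (show (0:ℝ) ≤ 3 by norm_num)
  have s5 := Real.sq_sqrt (show (0:ℝ) ≤ 5 by norm_num)
  have s7 := Real.sq_sqrt (show (0:ℝ) ≤ 7 by norm_num)
  have n2 := Real.sqrt_nonneg 2
  have n3 := Real.sqrt_nonneg 3
  have n5 := Real.sqrt_nonneg 5
  have n7 := Real.sqrt_nonneg 7
  have b3 : (1.7:ℝ) ≤ Real.sqrt 3 := by nlinarith
  have b5 : Real.sqrt 5 ≤ 2.3 := by nlinarith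
  have e20 : Real.sqrt 20 = 2 * Real.sqrt 5 := by
    rw [show (20:ℝ) = 2 ^ 2 * 5 by norm_num, Real.sqrt_mul (by positivity),
      Real.sqrt_sq (by norm_num)]
  have e8 : Real.sqrt 8 = 2 * Real.sqrt 2 := by
    rw [show (8:ℝ) = 2 ^ 2 * 2 by norm_num, Real.sqrt_mul (by positivity),
      Real.sqrt_sq (by norm_num)]
  have e21 : Real.sqrt 21 = Real.sqrt 3 * Real.sqrt 7 := by
    rw [show (21:ℝ) = 3 * 7 by norm_num, Real.sqrt_mul (by norm_num)]
  have h5ne : Real.sqrt 5 ≠ 0 := by positivity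
  have h3ne : Real.sqrt 3 ≠ 0 := by positivity
  have h7ne : Real.sqrt 7 ≠ 0 := by positivity
  have d5 : 8 / Real.sqrt 5 = 8 / 5 * Real.sqrt 5 := by
    field_simp; linear_combination (-1 : ℝ) * s5
  have d3 : 24 / Real.sqrt 3 = 8 * Real.sqrt 3 := by
    field_simp; linear_combination (-8 : ℝ) * s3
  have d7 : 12 * Real.sqrt 3 / Real.sqrt 7 = 12 / 7 * (Real.sqrt 3 * Real.sqrt 7) := by
    field_simp; linear_combination (-1 : ℝ) * s7
  have hlin : 1.7 * (x - 1) ≤ Real.sqrt 3 * (x - 1) :=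
    mul_le_mul_of_nonneg_right b3 (by linarith)
  have hqq : 0 ≤ Real.sqrt 3 * Real.sqrt 7 * (x ^ 2 - 3 * x + 2) :=
    mul_nonneg (mul_nonneg n3 n7) hq
  have hcc : 0 ≤ Real.sqrt 2 * (x ^ 3 - 6 * x ^ 2 + 11 * x - 6) := mul_nonneg n2 hc
  unfold diamondInverseNirmala₁ diamondInverseNirmala₂
  rw [e20, e8, e21, d5, d3, d7]
  clear s3 s5 s7 e20 e8 e21 d5 d3 d7 h5ne h3ne h7ne b3 hq hc
  nlinarith [hlin, hqq, hcc, b5, hx]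

lemma diamond_aux₂ (x : ℝ) (hx : 2 ≤ x) (hq : 0 ≤ x ^ 2 - 3 * x + 2)
    (hc : 0 ≤ x ^ 3 - 6 * x ^ 2 + 11 * x - 6) :
    diamondInverseNirmala₂ x < diamondNirmala x := by
  have s3 := Real.sq_sqrt (show (0:ℝ) ≤ 3 by norm_num)
  have s5 := Real.sq_sqrt (show (0:ℝ) ≤ 5 by norm_num)
  have s6 := Real.sq_sqrt (show (0:ℝ) ≤ 6 by norm_num)
  have s7 := Real.sq_sqrt (show (0:ℝ) ≤ 7 by norm_num)
  have n2 := Real.sqrt_nonneg 2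
  have n3 := Real.sqrt_nonneg 3
  have n5 := Real.sqrt_nonneg 5
  have n6 := Real.sqrt_nonneg 6
  have n7 := Real.sqrt_nonneg 7
  have b3u : Real.sqrt 3 ≤ 1.8 := by nlinarith
  have b5 : (2.2:ℝ) ≤ Real.sqrt 5 := by nlinarith
  have b6 : (2.4:ℝ) ≤ Real.sqrt 6 := by nlinarith
  have e8 : Real.sqrt 8 = 2 * Real.sqrt 2 := by
    rw [show (8:ℝ) = 2 ^ 2 * 2 by norm_num, Real.sqrt_mul (by positivity),
      Real.sqrt_sq (by norm_num)]
  have h5ne : Real.sqrt 5 ≠ 0 := by positivity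
  have h3ne : Real.sqrt 3 ≠ 0 := by positivity
  have h7ne : Real.sqrt 7 ≠ 0 := by positivity
  have d5 : 8 / Real.sqrt 5 = 8 / 5 * Real.sqrt 5 := by
    field_simp; linear_combination (-1 : ℝ) * s5
  have d3 : 24 / Real.sqrt 3 = 8 * Real.sqrt 3 := by
    field_simp; linear_combination (-8 : ℝ) * s3
  have d7 : 12 * Real.sqrt 3 / Real.sqrt 7 = 12 / 7 * (Real.sqrt 3 * Real.sqrt 7) := by
    field_simp; linear_combination (-1 : ℝ) * s7
  have hlin : 0 ≤ (12 * Real.sqrt 6 - 8 * Real.sqrt 3) * (x - 1) :=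
    mul_nonneg (by nlinarith) (by linarith)
  have hqq : 0 ≤ (6 * Real.sqrt 7 - 12 / 7 * (Real.sqrt 3 * Real.sqrt 7)) *
      (x ^ 2 - 3 * x + 2) :=
    mul_nonneg (by nlinarith) hq
  have hcc : 0 ≤ Real.sqrt 2 * (x ^ 3 - 6 * x ^ 2 + 11 * x - 6) := mul_nonneg n2 hc
  unfold diamondInverseNirmala₂ diamondNirmala
  rw [e8, d5, d3, d7]
  clear s3 s5 s6 s7 e8 d5 d3 d7 h5ne h3ne h7ne b3u b6 hq hc
  nlinarith [hlin, hqq, hcc, b5, n5]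

/-- For every natural number `s` with `2 ≤ s ≤ 25`, the closed-form Nirmala indices of the
diamond structure satisfy `IN₁(s) < IN₂(s) < N(s)`. -/
theorem diamond_nirmala_indices_order (s : ℕ) (h2 : 2 ≤ s) (h25 : s ≤ 25) :
    diamondInverseNirmala₁ (s : ℝ) < diamondInverseNirmala₂ (s : ℝ) ∧
    diamondInverseNirmala₂ (s : ℝ) < diamondNirmala (s : ℝ) := by
  have hx : (2:ℝ) ≤ (s:ℝ) := by exact_mod_cast h2
  have hc : 0 ≤ (s:ℝ) ^ 3 - 6 * (s:ℝ) ^ 2 + 11 * (s:ℝ) - 6 := by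
    rcases eq_or_lt_of_le h2 with h | h
    · rw [← h]; norm_num
    · have h3 : (3:ℝ) ≤ (s:ℝ) := by exact_mod_cast h
      nlinarith [mul_nonneg (mul_nonneg (by linarith : (0:ℝ) ≤ (s:ℝ) - 1)
        (by linarith : (0:ℝ) ≤ (s:ℝ) - 2)) (by linarith : (0:ℝ) ≤ (s:ℝ) - 3)]
  have hq : 0 ≤ (s:ℝ) ^ 2 - 3 * (s:ℝ) + 2 := by
    nlinarith [mul_nonneg (by linarith : (0:ℝ) ≤ (s:ℝ) - 1)
      (by linarith : (0:ℝ) ≤ (s:ℝ) - 2)]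
  exact ⟨diamond_aux₁ _ hx hq hc, diamond_aux₂ _ hx hq hc⟩
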